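/- Let K be a compact strictly convex body in ℝ² symmetric about the origin (K = −K), with boundary γ. If a parallelogram is inscribed in γ (all four vertices on γ), then its center is the origin. -/

import Mathlib

lemma aux_collinear_of_det_eq_zero (P Q R : ℝ × ℝ)
    (h : (Q - P).1 * (R - P).2 - (Q - P).2 * (R - P).1 = 0) :
    Collinear ℝ ({P, Q, R} : Set (ℝ × ℝ)) := by
  rw [collinear_iff_of_mem (Set.mem_insert P {Q, R})]
  rcases eq_or_ne Q P with hQP | hQP
  · refine ⟨R - P, fun p hp => ?_⟩
    rcases hp with rfl | hp'
    · exact ⟨0, by simp⟩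
    · rcases hp' with rfl | hp''
      · exact ⟨0, by simp [hQP]⟩
      · rw [Set.mem_singleton_iff] at hp''; subst hp''
        exact ⟨1, by simp [vadd_eq_add]⟩
  · have hx : Q - P ≠ 0 := sub_ne_zero.mpr hQP
    have hRrep : ∃ r : ℝ, R = r • (Q - P) +ᵥ P := by
      rcases eq_or_ne (Q - P).1 0 with h1 | h1
      · have h2 : (Q - P).2 ≠ 0 := fun h2 => hx (Prod.ext h1 h2)
        have hR1 : (R - P).1 = 0 := by
          have h' : (Q - P).2 * (R - P).1 = 0 := by rw [h1] at h; linarith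
          exact (mul_eq_zero.mp h').resolve_left h2
        refine ⟨(R - P).2 / (Q - P).2, ?_⟩
        have : R = ((R - P).2 / (Q - P).2) • (Q - P) + P := by
          apply Prod.ext
          · simp only [Prod.fst_add, Prod.smul_fst, smul_eq_mul, h1, mul_zero, zero_add]
            have : R.1 - P.1 = 0 := hR1
            linarith
          · simp only [Prod.snd_add, Prod.smul_snd, smul_eq_mul]
            rw [div_mul_eq_mul_div, mul_div_assoc, div_self h2, mul_one, Prod.snd_sub]; ring
        simpa [vadd_eq_add] using this
      · refine ⟨(R - P).1 / (Q - P).1, ?_⟩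
        have : R = ((R - P).1 / (Q - P).1) • (Q - P) + P := by
          apply Prod.ext
          · simp only [Prod.fst_add, Prod.smul_fst, smul_eq_mul]
            rw [div_mul_eq_mul_div, mul_div_assoc, div_self h1, mul_one, Prod.fst_sub]; ring
          · simp only [Prod.snd_add, Prod.smul_snd, smul_eq_mul]
            simp only [Prod.fst_sub, Prod.snd_sub] at h ⊢
            have h1' : Q.1 - P.1 ≠ 0 := by simpa using h1
            field_simp
            linear_combination h
        simpa [vadd_eq_add] using this
    refine ⟨Q - P, fun p hp => ?_⟩
    rcases hp with rfl | hp'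
    · exact ⟨0, by simp⟩
    · rcases hp' with rfl | hp''
      · exact ⟨1, by simp [vadd_eq_add]⟩
      · rw [Set.mem_singleton_iff] at hp''; subst hp''
        exact hRrep

lemma aux_core (K : Set (ℝ × ℝ)) (hK : StrictConvex ℝ K)
    (m u w : ℝ × ℝ) (α β : ℝ) (hrep : m = α • u + β • w)
    (hα : 0 < α) (hβ : 0 ≤ β) (hβα : β ≤ α) (hm0 : m ≠ 0)
    (hnA : -(m + u) ∈ K) (hB : m + w ∈ K) (hD : m - w ∈ K) :
    m - u ∈ interior K := by
  have h2α : (0:ℝ) < 2*α + 1 := by linarith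
  set c : ℝ := 1/(2*α+1) with hc
  have hc0 : 0 < c := by positivity
  have hc1 : c < 1 := by rw [hc, div_lt_one h2α]; linarith
  set a : ℝ := c*(α+β) with ha
  set b : ℝ := c*(α-β) with hb
  have ha0 : 0 ≤ a := by positivity
  have hb0 : 0 ≤ b := by
    apply mul_nonneg hc0.le; linarith
  have hab : a + b = 1 - c := by
    rw [ha, hb, hc]; field_simp; ring
  have habpos : 0 < a + b := by rw [hab]; linarith
  -- the convex combination of B and D
  set y : ℝ × ℝ := (a/(a+b)) • (m + w) + (b/(a+b)) • (m - w) with hy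
  have hyK : y ∈ K := by
    refine hK.convex hB hD (by positivity) (by positivity) ?_
    field_simp
  have hkey : m - u = c • (-(m + u)) + (1 - c) • y := by
    rw [hy, hrep]
    have e1 : (1 - c) • ((a/(a+b)) • ((α • u + β • w) + w) + (b/(a+b)) • ((α • u + β • w) - w))
        = ((1-c)*(a/(a+b))) • ((α • u + β • w) + w) + ((1-c)*(b/(a+b))) • ((α • u + β • w) - w) := by
      module
    rw [e1]
    have hc1' : (1:ℝ) - c ≠ 0 := by linarith
    have f1 : (1-c)*(a/(a+b)) = a := by
      rw [hab, mul_comm]; exact div_mul_cancel₀ a hc1'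
    have f2 : (1-c)*(b/(a+b)) = b := by
      rw [hab, mul_comm]; exact div_mul_cancel₀ b hc1'
    rw [f1, f2]
    have gc : c * (2*α+1) = 1 := by rw [hc]; field_simp
    have g1 : α - 1 = -(c*(α+1)) + a*α + b*α := by rw [ha, hb]; nlinarith [gc]
    have g2 : β = -(c*β) + a*(β+1) + b*(β-1) := by rw [ha, hb]; nlinarith [gc]
    match_scalars <;> nlinarith [gc, ha.symm, hb.symm]
  have hyne : -(m + u) ≠ y := by
    intro he
    apply hm0
    have : m - u = -(m+u) := by
      rw [hkey, ← he]; module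
    have h2 : m + m = 0 := by linear_combination this
    have hm2 : (2:ℝ) • m = 0 := by rw [two_smul]; exact h2
    exact (smul_eq_zero.mp hm2).resolve_left two_ne_zero
  have := hK hnA hyK hyne hc0 (by linarith : (0:ℝ) < 1 - c) (by ring)
  rwa [← hkey] at this


theorem inscribed_parallelogram_centered (K : Set (ℝ × ℝ))
    (hK : IsCompact K) (hKconv : StrictConvex ℝ K) (hKint : (interior K).Nonempty)
    (hsymm : K = -K)
    (A B C D : ℝ × ℝ)
    (hA : A ∈ frontier K) (hB : B ∈ frontier K) (hC : C ∈ frontier K)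
    (hD : D ∈ frontier K)
    (hpar : B - A = C - D) (hnd : ¬ Collinear ℝ ({A, B, D} : Set (ℝ × ℝ))) :
    (A + C) / 2 = 0 ∧ (B + D) / 2 = 0 := by
  have hclosed : IsClosed K := hK.isClosed
  have hsub : frontier K ⊆ K := hclosed.frontier_subset
  have hneg : ∀ x : ℝ × ℝ, x ∈ K → -x ∈ K := by
    intro x hx; rw [hsymm] at hx; exact Set.mem_neg.mp hx
  have hBD : B + D = A + C := by linear_combination hpar
  suffices hs : A + C = 0 by
    constructor
    · rw [hs]
      apply Prod.ext <;> simp [Prod.fst_div, Prod.snd_div]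
    · rw [hBD, hs]
      apply Prod.ext <;> simp [Prod.fst_div, Prod.snd_div]
  by_contra hAC
  set u : ℝ × ℝ := (2:ℝ)⁻¹ • (A - C) with hu
  set w : ℝ × ℝ := (2:ℝ)⁻¹ • (B - D) with hw
  set m : ℝ × ℝ := (2:ℝ)⁻¹ • (A + C) with hm
  have hm' : m = (2:ℝ)⁻¹ • (B + D) := by rw [hm, hBD]
  have hmA : m + u = A := by rw [hm, hu]; module
  have hmC : m - u = C := by rw [hm, hu]; module
  have hmB : m + w = B := by rw [hm', hw]; module
  have hmD : m - w = D := by rw [hm', hw]; module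
  have hm0 : m ≠ 0 := by
    intro h
    exact hAC ((smul_eq_zero.mp (hm ▸ h)).resolve_left (by norm_num))
  -- the determinant is nonzero
  have hd0 : u.1 * w.2 - u.2 * w.1 ≠ 0 := by
    intro h0
    apply hnd
    apply aux_collinear_of_det_eq_zero
    have e1 : B - A = w - u := by rw [← hmA, ← hmB]; ring
    have e2 : D - A = -w - u := by rw [← hmA, ← hmD]; ring
    rw [e1, e2]
    simp only [Prod.fst_sub, Prod.snd_sub, Prod.fst_neg, Prod.snd_neg]
    linear_combination 2 * h0
  set d : ℝ := u.1 * w.2 - u.2 * w.1 with hdd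
  set α : ℝ := (m.1 * w.2 - m.2 * w.1) / d with hα
  set β : ℝ := (u.1 * m.2 - u.2 * m.1) / d with hβ
  have hrep : m = α • u + β • w := by
    apply Prod.ext
    · simp only [Prod.fst_add, Prod.smul_fst, smul_eq_mul, hα, hβ, hdd]
      rw [div_mul_eq_mul_div, div_mul_eq_mul_div, ← add_div, eq_div_iff (show u.1 * w.2 - u.2 * w.1 ≠ 0 from hd0)]
      ring
    · simp only [Prod.snd_add, Prod.smul_snd, smul_eq_mul, hα, hβ, hdd]
      rw [div_mul_eq_mul_div, div_mul_eq_mul_div, ← add_div, eq_div_iff (show u.1 * w.2 - u.2 * w.1 ≠ 0 from hd0)]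
      ring
  -- all eight points are in K
  have hAK : A ∈ K := hsub hA
  have hBK : B ∈ K := hsub hB
  have hCK : C ∈ K := hsub hC
  have hDK : D ∈ K := hsub hD
  have hnAK : -A ∈ K := hneg A hAK
  have hnBK : -B ∈ K := hneg B hBK
  have hnCK : -C ∈ K := hneg C hCK
  have hnDK : -D ∈ K := hneg D hDK
  have hAi : A ∉ interior K := hA.2
  have hBi : B ∉ interior K := hB.2
  have hCi : C ∉ interior K := hC.2
  have hDi : D ∉ interior K := hD.2
  -- if both coefficients vanish then m = 0
  have hαβ0 : ¬ (α = 0 ∧ β = 0) := by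
    rintro ⟨h1, h2⟩
    apply hm0
    rw [hrep, h1, h2]; module
  rcases le_or_gt |β| |α| with hle | hlt
  · -- |β| ≤ |α|, so α ≠ 0
    have hαne : α ≠ 0 := by
      intro h; apply hαβ0
      refine ⟨h, ?_⟩
      rw [h] at hle; simp at hle
      exact hle
    rcases hαne.lt_or_gt with hαneg | hαpos
    · -- α < 0 : conclusion A ∈ interior K
      rw [abs_of_neg hαneg] at hle
      rcases le_or_gt 0 β with hβpos | hβneg
      · rw [abs_of_nonneg hβpos] at hle
        apply hAi
        have := aux_core K hKconv m (-u) w (-α) β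
          (by rw [hrep]; module) (by linarith) hβpos hle hm0
          (by rw [show -(m + -u) = -C by rw [← hmC]; ring]; exact hnCK)
          (by rw [hmB]; exact hBK) (by rw [hmD]; exact hDK)
        rwa [show m - -u = A by rw [← hmA]; ring] at this
      · rw [abs_of_neg hβneg] at hle
        apply hAi
        have := aux_core K hKconv m (-u) (-w) (-α) (-β)
          (by rw [hrep]; module) (by linarith) (by linarith) hle hm0
          (by rw [show -(m + -u) = -C by rw [← hmC]; ring]; exact hnCK)
          (by rw [show m + -w = D by rw [← hmD]; ring]; exact hDK)
          (by rw [show m - -w = B by rw [← hmB]; ring]; exact hBK)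
        rwa [show m - -u = A by rw [← hmA]; ring] at this
    · -- α > 0 : conclusion C ∈ interior K
      rw [abs_of_pos hαpos] at hle
      rcases le_or_gt 0 β with hβpos | hβneg
      · rw [abs_of_nonneg hβpos] at hle
        apply hCi
        have := aux_core K hKconv m u w α β hrep hαpos hβpos hle hm0
          (by rw [hmA]; exact hnAK) (by rw [hmB]; exact hBK) (by rw [hmD]; exact hDK)
        rwa [hmC] at this
      · rw [abs_of_neg hβneg] at hle
        apply hCi
        have := aux_core K hKconv m u (-w) α (-β)
          (by rw [hrep]; module) hαpos (by linarith) hle hm0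
          (by rw [hmA]; exact hnAK)
          (by rw [show m + -w = D by rw [← hmD]; ring]; exact hDK)
          (by rw [show m - -w = B by rw [← hmB]; ring]; exact hBK)
        rwa [hmC] at this
  · -- |α| < |β|, so β ≠ 0 ; swap roles of u and w
    have hβne : β ≠ 0 := by
      intro h; rw [h] at hlt; simp at hlt
      exact absurd (lt_of_le_of_lt (abs_nonneg α) hlt) (lt_irrefl 0)
    have hle : |α| ≤ |β| := hlt.le
    rcases hβne.lt_or_gt with hβneg | hβpos
    · rw [abs_of_neg hβneg] at hle
      rcases le_or_gt 0 α with hαpos | hαneg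
      · rw [abs_of_nonneg hαpos] at hle
        apply hBi
        have := aux_core K hKconv m (-w) u (-β) α
          (by rw [hrep]; module) (by linarith) hαpos hle hm0
          (by rw [show -(m + -w) = -D by rw [← hmD]; ring]; exact hnDK)
          (by rw [hmA]; exact hAK) (by rw [hmC]; exact hCK)
        rwa [show m - -w = B by rw [← hmB]; ring] at this
      · rw [abs_of_neg hαneg] at hle
        apply hBi
        have := aux_core K hKconv m (-w) (-u) (-β) (-α)
          (by rw [hrep]; module) (by linarith) (by linarith) hle hm0
          (by rw [show -(m + -w) = -D by rw [← hmD]; ring]; exact hnDK)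
          (by rw [show m + -u = C by rw [← hmC]; ring]; exact hCK)
          (by rw [show m - -u = A by rw [← hmA]; ring]; exact hAK)
        rwa [show m - -w = B by rw [← hmB]; ring] at this
    · rw [abs_of_pos hβpos] at hle
      rcases le_or_gt 0 α with hαpos | hαneg
      · rw [abs_of_nonneg hαpos] at hle
        apply hDi
        have := aux_core K hKconv m w u β α
          (by rw [hrep]; module) hβpos hαpos hle hm0
          (by rw [show -(m + w) = -B by rw [← hmB]]; exact hnBK)
          (by rw [hmA]; exact hAK) (by rw [hmC]; exact hCK)
        rwa [hmD] at this
      · rw [abs_of_neg hαneg] at hle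
        apply hDi
        have := aux_core K hKconv m w (-u) β (-α)
          (by rw [hrep]; module) hβpos (by linarith) hle hm0
          (by rw [show -(m + w) = -B by rw [← hmB]]; exact hnBK)
          (by rw [show m + -u = C by rw [← hmC]; ring]; exact hCK)
          (by rw [show m - -u = A by rw [← hmA]; ring]; exact hAK)
        rwa [hmD] at this
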